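/- For CTL*: a formula φ is satisfiable if and only if its guarded path-relativization φ̂ = Θ ∧ φ' is satisfiable, where ·' replaces each path quantifier ∀α by ∀(□p_{n+1} → α') and Θ = p_{n+1} ∧ AG(EX p_{n+1} ↔ p_{n+1}). -/

import Mathlib

/-- Serial Kripke models. -/
structure Kripke (S : Type) where
  rel : S → S → Prop
  serial : ∀ s, ∃ t, rel s t
  val : ℕ → S → Prop

def isPath {S : Type} (M : Kripke S) (π : ℕ → S) : Prop :=
  ∀ i, M.rel (π i) (π (i + 1))

mutual
/-- CTL* state formulas. -/
inductive SF : Type where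
  | var : ℕ → SF
  | bot : SF
  | imp : SF → SF → SF
  | all : PF → SF
/-- CTL* path formulas. -/
inductive PF : Type where
  | st : SF → PF
  | imp : PF → PF → PF
  | unt : PF → PF → PF
  | next : PF → PF
end

def SF.neg (φ : SF) : SF := .imp φ .bot
def PF.neg (ϑ : PF) : PF := .imp ϑ (.st .bot)
def PF.top : PF := PF.neg (.st .bot)
/-- □ϑ = ¬(⊤ U ¬ϑ). -/
def PF.box (ϑ : PF) : PF := PF.neg (.unt PF.top (PF.neg ϑ))
/-- ∃ϑ = ¬∀¬ϑ. -/
def SF.exa (ϑ : PF) : SF := SF.neg (.all (PF.neg ϑ))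
def SF.conj (φ ψ : SF) : SF := SF.neg (.imp φ (SF.neg ψ))
def SF.iffc (φ ψ : SF) : SF := SF.conj (.imp φ ψ) (.imp ψ φ)
/-- AG φ = ∀□φ. -/
def SF.ag (φ : SF) : SF := .all (PF.box (.st φ))
/-- EX φ = ∃Xφ. -/
def SF.ex (φ : SF) : SF := SF.exa (.next (.st φ))

mutual
/-- Satisfaction of state formulas at states. -/
def ssat {S : Type} (M : Kripke S) : SF → S → Prop
  | .var n, s => M.val n s
  | .bot, _ => False
  | .imp a b, s => ssat M a s → ssat M b s
  | .all ϑ, s => ∀ π : ℕ → S, isPath M π → π 0 = s → psat M ϑ π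
/-- Satisfaction of path formulas on paths. -/
def psat {S : Type} (M : Kripke S) : PF → (ℕ → S) → Prop
  | .st φ, π => ssat M φ (π 0)
  | .imp a b, π => psat M a π → psat M b π
  | .unt a b, π => ∃ i, psat M b (fun j => π (i + j)) ∧
      ∀ j, j < i → psat M a (fun l => π (j + l))
  | .next a, π => psat M a (fun j => π (j + 1))
end

def ssatisfiable (φ : SF) : Prop := ∃ (S : Type) (M : Kripke S) (s : S), ssat M φ s

mutual
def soccurs (q : ℕ) : SF → Prop
  | .var n => n = q
  | .bot => False
  | .imp a b => soccurs q a ∨ soccurs q b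
  | .all ϑ => poccurs q ϑ
def poccurs (q : ℕ) : PF → Prop
  | .st φ => soccurs q φ
  | .imp a b => poccurs q a ∨ poccurs q b
  | .unt a b => poccurs q a ∨ poccurs q b
  | .next a => poccurs q a
end

mutual
/-- The path-relativizing translation ·' with guard variable q:
(∀α)' = ∀(□q → α'), homomorphic elsewhere. -/
def srel (q : ℕ) : SF → SF
  | .var n => .var n
  | .bot => .bot
  | .imp a b => .imp (srel q a) (srel q b)
  | .all ϑ => .all (.imp (PF.box (.st (.var q))) (prel q ϑ))
def prel (q : ℕ) : PF → PF
  | .st φ => .st (srel q φ)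
  | .imp a b => .imp (prel q a) (prel q b)
  | .unt a b => .unt (prel q a) (prel q b)
  | .next a => .next (prel q a)
end

/-- Θ = q ∧ AG(EX q ↔ q). -/
def ThetaS (q : ℕ) : SF :=
  SF.conj (.var q) (SF.ag (SF.iffc (SF.ex (.var q)) (.var q)))

/-- χ₀ = ∀□p, χ_{k+1} = p ∧ EX(¬p ∧ EX χ_k); p is var 0. -/
def chiS : ℕ → SF
  | 0 => SF.ag (.var 0)
  | k + 1 => SF.conj (.var 0) (SF.ex (SF.conj (SF.neg (.var 0)) (SF.ex (chiS k))))

/-- A_m = χ_m ∧ EX AG ¬p. -/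
def AformS (m : ℕ) : SF := SF.conj (chiS m) (SF.ex (SF.ag (SF.neg (.var 0))))

/-- B_m = EX A_m. -/
def BformS (m : ℕ) : SF := SF.ex (AformS m)

mutual
/-- The substitution σ : pᵢ ↦ Bᵢ for 1 ≤ i ≤ n+1. -/
def sigmaS (n : ℕ) : SF → SF
  | .var i => if 1 ≤ i ∧ i ≤ n + 1 then BformS i else .var i
  | .bot => .bot
  | .imp a b => .imp (sigmaS n a) (sigmaS n b)
  | .all ϑ => .all (sigmaP n ϑ)
def sigmaP (n : ℕ) : PF → PF
  | .st φ => .st (sigmaS n φ)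
  | .imp a b => .imp (sigmaP n a) (sigmaP n b)
  | .unt a b => .unt (sigmaP n a) (sigmaP n b)
  | .next a => .next (sigmaP n a)
end

/-! ### Auxiliary machinery -/

section Aux

variable {S : Type}

noncomputable def pathFrom (M : Kripke S) (t : S) : ℕ → S
  | 0 => t
  | k + 1 => Classical.choose (M.serial (pathFrom M t k))

lemma isPath_pathFrom (M : Kripke S) (t : S) : isPath M (pathFrom M t) := by
  intro i
  exact Classical.choose_spec (M.serial (pathFrom M t i))

def consP (t : S) (π : ℕ → S) : ℕ → S
  | 0 => t
  | k + 1 => π k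

lemma isPath_consP {M : Kripke S} {t : S} {π : ℕ → S}
    (h1 : M.rel t (π 0)) (h2 : isPath M π) : isPath M (consP t π) := by
  intro i
  cases i with
  | zero => exact h1
  | succ k => exact h2 k

lemma psat_boxvar (M : Kripke S) (m : ℕ) (π : ℕ → S) :
    psat M (PF.box (.st (.var m))) π ↔ ∀ i, M.val m (π i) := by
  simp only [PF.box, PF.neg, PF.top, psat, ssat]
  constructor
  · intro h i
    by_contra hc
    exact h ⟨i, fun hp => hc (by simpa using hp), fun _ _ h => h⟩
  · rintro h ⟨i, hi, -⟩
    exact hi (by simpa using h i)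

lemma psat_imp {S : Type} (M : Kripke S) (a b : PF) (π : ℕ → S) :
    psat M (.imp a b) π ↔ (psat M a π → psat M b π) := by
  simp only [psat]

lemma psat_boxst {S : Type} (M : Kripke S) (a : SF) (π : ℕ → S) :
    psat M (PF.box (.st a)) π ↔ ∀ i, ssat M a (π i) := by
  simp only [PF.box, PF.neg, PF.top, psat, ssat]
  constructor
  · intro h i
    by_contra hc
    exact h ⟨i, fun hp => hc (by simpa using hp), fun _ _ h => h⟩
  · rintro h ⟨i, hi, -⟩
    exact hi (by simpa using h i)

lemma ssat_neg (M : Kripke S) (a : SF) (t : S) :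
    ssat M (SF.neg a) t ↔ ¬ ssat M a t := by
  simp [SF.neg, ssat]

lemma ssat_conj (M : Kripke S) (a b : SF) (t : S) :
    ssat M (SF.conj a b) t ↔ ssat M a t ∧ ssat M b t := by
  simp only [SF.conj, SF.neg, ssat]
  tauto

lemma ssat_iffc (M : Kripke S) (a b : SF) (t : S) :
    ssat M (SF.iffc a b) t ↔ (ssat M a t ↔ ssat M b t) := by
  simp only [SF.iffc, ssat_conj, ssat]
  tauto

lemma ssat_ex (M : Kripke S) (a : SF) (t : S) :
    ssat M (SF.ex a) t ↔ ∃ u, M.rel t u ∧ ssat M a u := by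
  simp only [SF.ex, SF.exa, SF.neg, ssat, psat]
  constructor
  · intro h
    by_contra hc
    push_neg at hc
    apply h
    intro π hπ h0 ha
    exact hc (π 1) (h0 ▸ hπ 0) (by simpa [psat] using ha)
  · rintro ⟨u, hr, hu⟩ h
    exact h (consP t (pathFrom M u)) (isPath_consP hr (isPath_pathFrom M u)) rfl
      (by simpa [consP, pathFrom, psat] using hu)

lemma ssat_ag (M : Kripke S) (a : SF) (t : S) :
    ssat M (SF.ag a) t ↔ ∀ π, isPath M π → π 0 = t → ∀ i, ssat M a (π i) := by
  simp only [SF.ag, ssat]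
  constructor
  · intro h π hπ h0 i
    exact (psat_boxst M a π).mp (h π hπ h0) i
  · intro h π hπ h0
    exact (psat_boxst M a π).mpr (h π hπ h0)

lemma ssat_ag_step (M : Kripke S) (a : SF) {t u : S}
    (h : ssat M (SF.ag a) t) (hr : M.rel t u) : ssat M (SF.ag a) u := by
  rw [ssat_ag] at h ⊢
  intro π hπ h0 i
  exact h (consP t π) (isPath_consP (h0 ▸ hr) hπ) rfl (i + 1)

lemma ssat_ag_reach (M : Kripke S) (a : SF) {s t : S}
    (h : ssat M (SF.ag a) s) (hr : Relation.ReflTransGen M.rel s t) :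
    ssat M a t := by
  have hag : ssat M (SF.ag a) t := by
    induction hr with
    | refl => exact h
    | tail _ hstep ih => exact ssat_ag_step M a ih hstep
  exact (ssat_ag M a t).mp hag (pathFrom M t) (isPath_pathFrom M t) rfl 0

mutual
theorem ssat_congr (M : Kripke S) (v : ℕ → S → Prop) :
    ∀ (α : SF), (∀ m, soccurs m α → ∀ u, v m u ↔ M.val m u) →
      ∀ t, (ssat {M with val := v} α t ↔ ssat M α t)
  | .var m, h, t => by simpa [ssat] using h m rfl t
  | .bot, _, _ => Iff.rfl
  | .imp a b, h, t => by
      simp only [ssat]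
      exact imp_congr (ssat_congr M v a (fun m hm => h m (Or.inl hm)) t)
        (ssat_congr M v b (fun m hm => h m (Or.inr hm)) t)
  | .all ϑ, h, t => by
      simp only [ssat]
      exact forall_congr' fun π => forall_congr' fun _ => forall_congr' fun _ =>
        psat_congr M v ϑ h π
theorem psat_congr (M : Kripke S) (v : ℕ → S → Prop) :
    ∀ (ϑ : PF), (∀ m, poccurs m ϑ → ∀ u, v m u ↔ M.val m u) →
      ∀ π, (psat {M with val := v} ϑ π ↔ psat M ϑ π)
  | .st a, h, π => by
      simp only [psat]
      exact ssat_congr M v a h (π 0)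
  | .imp a b, h, π => by
      simp only [psat]
      exact imp_congr (psat_congr M v a (fun m hm => h m (Or.inl hm)) π)
        (psat_congr M v b (fun m hm => h m (Or.inr hm)) π)
  | .unt a b, h, π => by
      simp only [psat]
      exact exists_congr fun i =>
        and_congr (psat_congr M v b (fun m hm => h m (Or.inr hm)) _)
          (forall_congr' fun j => forall_congr' fun _ =>
            psat_congr M v a (fun m hm => h m (Or.inl hm)) _)
  | .next a, h, π => by
      simp only [psat]
      exact psat_congr M v a h _
end

mutual
theorem srel_triv (M : Kripke S) (q : ℕ) (hq : ∀ t, M.val q t) :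
    ∀ (α : SF) t, ssat M (srel q α) t ↔ ssat M α t
  | .var m, t => Iff.rfl
  | .bot, _ => Iff.rfl
  | .imp a b, t => by
      simp only [srel, ssat]
      exact imp_congr (srel_triv M q hq a t) (srel_triv M q hq b t)
  | .all ϑ, t => by
      simp only [srel, ssat, psat_imp, psat_boxvar]
      constructor
      · intro H π hπ h0
        exact (prel_triv M q hq ϑ π).mp (H π hπ h0 (fun i => hq _))
      · intro H π hπ h0 _
        exact (prel_triv M q hq ϑ π).mpr (H π hπ h0)
theorem prel_triv (M : Kripke S) (q : ℕ) (hq : ∀ t, M.val q t) :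
    ∀ (ϑ : PF) π, psat M (prel q ϑ) π ↔ psat M ϑ π
  | .st a, π => by
      simp only [prel, psat]
      exact srel_triv M q hq a (π 0)
  | .imp a b, π => by
      simp only [prel, psat]
      exact imp_congr (prel_triv M q hq a π) (prel_triv M q hq b π)
  | .unt a b, π => by
      simp only [prel, psat]
      exact exists_congr fun i =>
        and_congr (prel_triv M q hq b _)
          (forall_congr' fun j => forall_congr' fun _ => prel_triv M q hq a _)
  | .next a, π => by
      simp only [prel, psat]
      exact prel_triv M q hq a _
end

/-- Submodel on a predicate that is "serial". -/
def subModel (M : Kripke S) (P : S → Prop)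
    (hser : ∀ t, P t → ∃ u, M.rel t u ∧ P u) : Kripke {x // P x} where
  rel a b := M.rel a.1 b.1
  serial a := by
    obtain ⟨u, hr, hp⟩ := hser a.1 a.2
    exact ⟨⟨u, hp⟩, hr⟩
  val m a := M.val m a.1

mutual
theorem sub_ssat (M : Kripke S) (q : ℕ) (P : S → Prop)
    (hser : ∀ t, P t → ∃ u, M.rel t u ∧ P u)
    (h1 : ∀ t, P t → M.val q t)
    (h2 : ∀ t u, P t → M.rel t u → M.val q u → P u) :
    ∀ (α : SF) (t : {x // P x}),
      ssat (subModel M P hser) α t ↔ ssat M (srel q α) t.1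
  | .var m, t => Iff.rfl
  | .bot, _ => Iff.rfl
  | .imp a b, t => by
      simp only [srel, ssat]
      exact imp_congr (sub_ssat M q P hser h1 h2 a t) (sub_ssat M q P hser h1 h2 b t)
  | .all ϑ, t => by
      simp only [srel, ssat, psat_imp, psat_boxvar]
      constructor
      · intro H π hπ h0 hbox
        have hP : ∀ i, P (π i) := by
          intro i
          induction i with
          | zero => exact h0 ▸ t.2
          | succ k ih => exact h2 _ _ ih (hπ k) (hbox (k + 1))
        have hπ' : isPath (subModel M P hser) (fun i => (⟨π i, hP i⟩ : {x // P x})) :=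
          fun i => hπ i
        have := H (fun i => ⟨π i, hP i⟩) hπ' (Subtype.ext h0)
        exact (sub_psat M q P hser h1 h2 ϑ _).mp this
      · intro H π' hπ' h0
        have hpath : isPath M (fun i => (π' i).1) := fun i => hπ' i
        have := H (fun i => (π' i).1) hpath (congrArg Subtype.val h0)
          (fun i => h1 _ (π' i).2)
        exact (sub_psat M q P hser h1 h2 ϑ π').mpr this
theorem sub_psat (M : Kripke S) (q : ℕ) (P : S → Prop)
    (hser : ∀ t, P t → ∃ u, M.rel t u ∧ P u)
    (h1 : ∀ t, P t → M.val q t)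
    (h2 : ∀ t u, P t → M.rel t u → M.val q u → P u) :
    ∀ (ϑ : PF) (π : ℕ → {x // P x}),
      psat (subModel M P hser) ϑ π ↔ psat M (prel q ϑ) (fun i => (π i).1)
  | .st a, π => by
      simp only [prel, psat]
      exact sub_ssat M q P hser h1 h2 a (π 0)
  | .imp a b, π => by
      simp only [prel, psat]
      exact imp_congr (sub_psat M q P hser h1 h2 a π) (sub_psat M q P hser h1 h2 b π)
  | .unt a b, π => by
      simp only [prel, psat]
      exact exists_congr fun i =>
        and_congr (sub_psat M q P hser h1 h2 b _)
          (forall_congr' fun j => forall_congr' fun _ => sub_psat M q P hser h1 h2 a _)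
  | .next a, π => by
      simp only [prel, psat]
      exact sub_psat M q P hser h1 h2 a _
end

end Aux

/-- A CTL* formula φ with variables among p₁,…,pₙ is satisfiable iff its guarded
path-relativization φ̂ = Θ ∧ φ' (guard p_{n+1}) is satisfiable. -/
theorem ctlstar_guarded_relativization_sat (n : ℕ) (φ : SF)
    (hvars : ∀ q, soccurs q φ → 1 ≤ q ∧ q ≤ n) :
    ssatisfiable φ ↔ ssatisfiable (SF.conj (ThetaS (n + 1)) (srel (n + 1) φ)) := by
  set q := n + 1 with hqdef
  constructor
  · rintro ⟨S, M, s, hs⟩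
    set v : ℕ → S → Prop := fun m t => if m = q then True else M.val m t with hv
    set M₂ : Kripke S := {M with val := v} with hM₂
    have hq2 : ∀ t, M₂.val q t := by
      intro t; simp [hM₂, hv]
    have hφ2 : ssat M₂ φ s := by
      refine (ssat_congr M v φ ?_ s).mpr hs
      intro m hm u
      have := hvars m hm
      simp [hv, show m ≠ q by omega]
    have hrel : ssat M₂ (srel q φ) s := (srel_triv M₂ q hq2 φ s).mpr hφ2
    have hTheta : ssat M₂ (ThetaS q) s := by
      rw [ThetaS, ssat_conj]
      constructor
      · show M₂.val q s
        exact hq2 s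
      · rw [ssat_ag]
        intro π hπ h0 i
        rw [ssat_iffc, ssat_ex]
        constructor
        · intro _
          exact hq2 _
        · intro _
          obtain ⟨u, hu⟩ := M₂.serial (π i)
          exact ⟨u, hu, hq2 u⟩
    exact ⟨S, M₂, s, (ssat_conj M₂ _ _ s).mpr ⟨hTheta, hrel⟩⟩
  · rintro ⟨S, M, s, hs⟩
    rw [ssat_conj] at hs
    obtain ⟨hTheta, hrel⟩ := hs
    rw [ThetaS, ssat_conj] at hTheta
    obtain ⟨hqs, hag⟩ := hTheta
    have hqs' : M.val q s := hqs
    have hsucc : ∀ t, Relation.ReflTransGen M.rel s t → M.val q t →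
        ∃ u, M.rel t u ∧ M.val q u := by
      intro t hr hqt
      have h2 := ssat_ag_reach M _ hag hr
      rw [ssat_iffc, ssat_ex] at h2
      obtain ⟨u, hru, hqu⟩ := h2.mpr hqt
      exact ⟨u, hru, hqu⟩
    set P : S → Prop := fun t => Relation.ReflTransGen M.rel s t ∧ M.val q t with hP
    have hser : ∀ t, P t → ∃ u, M.rel t u ∧ P u := by
      rintro t ⟨hr, hqt⟩
      obtain ⟨u, hru, hqu⟩ := hsucc t hr hqt
      exact ⟨u, hru, hr.tail hru, hqu⟩
    have h1 : ∀ t, P t → M.val q t := fun _ h => h.2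
    have h2 : ∀ t u, P t → M.rel t u → M.val q u → P u :=
      fun t u ht hr hq => ⟨ht.1.tail hr, hq⟩
    have hs0 : P s := ⟨Relation.ReflTransGen.refl, hqs'⟩
    have := (sub_ssat M q P hser h1 h2 φ ⟨s, hs0⟩).mpr hrel
    exact ⟨{x // P x}, subModel M P hser, ⟨s, hs0⟩, this⟩
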